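/- For every n-qubit Pauli string P containing n_X X's, n_Y Y's, n_Z Z's (and identities elsewhere), every single-qubit unitary V ∈ SU(2), and every computational basis state |b⟩, the value ⟨b| V^{⊗n} P V^{†⊗n} |b⟩ depends only on (n_X, n_Y, n_Z), on the set of identity sites, and on b — not on the particular arrangement of the X, Y, Z factors among the non-identity sites. Consequently, each operator B_{S,k}^⊥ = (2^n k(k+1))^{-1/2}(Σ_{j=1}^k P_j − k P_{k+1}) built from a fixed-identity permutation-invariant set S satisfies ⟨b| V^{⊗n} B_{S,k}^⊥ V^{†⊗n} |b⟩ = 0 for all V ∈ SU(2) and all b. -/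
import Mathlib


open Matrix Finset

noncomputable section

abbrev Bits (n : ℕ) := Fin n → Fin 2
abbrev Op (n : ℕ) := Matrix (Bits n) (Bits n) ℂ

def pauli1 : Fin 4 → Matrix (Fin 2) (Fin 2) ℂ :=
  ![1, !![0, 1; 1, 0], !![0, -Complex.I; Complex.I, 0], !![1, 0; 0, -1]]

def pStr {n : ℕ} (s : Fin n → Fin 4) : Op n :=
  Matrix.of fun b c => ∏ i, pauli1 (s i) (b i) (c i)

/-- the global tensor power `V^{⊗n}` of a single-qubit operator. -/
def tpow {n : ℕ} (V : Matrix (Fin 2) (Fin 2) ℂ) : Op n :=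
  Matrix.of fun b c => ∏ i, V (b i) (c i)

def sameClass {n : ℕ} (s t : Fin n → Fin 4) : Prop :=
  (∀ i, s i = 0 ↔ t i = 0) ∧
    ∀ a : Fin 4, (univ.filter fun i => s i = a).card =
      (univ.filter fun i => t i = a).card

open scoped Classical in
def cls {n : ℕ} (s : Fin n → Fin 4) : Finset (Fin n → Fin 4) :=
  univ.filter (sameClass s)

/-! Auxiliary material -/

def siteProd {n : ℕ} (M : Fin n → Matrix (Fin 2) (Fin 2) ℂ) : Op n :=
  Matrix.of fun b c => ∏ i, M i (b i) (c i)

lemma siteProd_mul {n : ℕ} (M N : Fin n → Matrix (Fin 2) (Fin 2) ℂ) :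
    siteProd M * siteProd N = siteProd (fun i => M i * N i) := by
  ext b c
  simp only [siteProd, Matrix.mul_apply, Matrix.of_apply]
  rw [Fintype.prod_sum]
  simp [Finset.prod_mul_distrib]

lemma siteProd_conj {n : ℕ} (M : Fin n → Matrix (Fin 2) (Fin 2) ℂ) :
    (siteProd M)ᴴ = siteProd (fun i => (M i)ᴴ) := by
  ext b c
  simp [siteProd, Matrix.conjTranspose_apply, map_prod]

lemma fiber_prod {n : ℕ} (E : Fin 4 → ℂ) (u : Fin n → Fin 4) :
    ∏ i, E (u i) = ∏ a : Fin 4, E a ^ (univ.filter fun i => u i = a).card := by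
  rw [← Finset.prod_fiberwise univ u (fun i => E (u i))]
  refine Finset.prod_congr rfl fun a _ => ?_
  rw [Finset.prod_congr rfl (fun i hi => by rw [(Finset.mem_filter.mp hi).2]),
    Finset.prod_const]

lemma conj_diag {n : ℕ} (V : Matrix (Fin 2) (Fin 2) ℂ)
    (hV : V ∈ Matrix.specialUnitaryGroup (Fin 2) ℂ) (s t : Fin n → Fin 4)
    (hst : sameClass s t) (b : Bits n) :
    (tpow (n := n) V * pStr s * (tpow (n := n) V)ᴴ) b b =
      (tpow (n := n) V * pStr t * (tpow (n := n) V)ᴴ) b b := by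
  have hU : V ∈ Matrix.unitaryGroup (Fin 2) ℂ :=
    (Matrix.mem_specialUnitaryGroup_iff.mp hV).1
  have hVV : V * Vᴴ = 1 := by
    have := Matrix.mem_unitaryGroup_iff.mp hU
    simpa [Matrix.star_eq_conjTranspose] using this
  have hVV' : Vᴴ * V = 1 := by
    have := Matrix.mem_unitaryGroup_iff'.mp hU
    simpa [Matrix.star_eq_conjTranspose] using this
  have hrw : ∀ u : Fin n → Fin 4,
      tpow (n := n) V * pStr u * (tpow (n := n) V)ᴴ =
        siteProd (fun i => V * pauli1 (u i) * Vᴴ) := by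
    intro u
    have h1 : tpow (n := n) V = siteProd (fun _ => V) := rfl
    have h2 : pStr u = siteProd (fun i => pauli1 (u i)) := rfl
    rw [h1, h2, siteProd_mul, siteProd_conj, siteProd_mul]
  rw [hrw s, hrw t]
  show (∏ i, (V * pauli1 (s i) * Vᴴ) (b i) (b i)) =
    ∏ i, (V * pauli1 (t i) * Vᴴ) (b i) (b i)
  set D : Fin 4 → ℂ := fun a => (V * pauli1 a * Vᴴ) 0 0 with hDdef
  have hD0 : ∀ x : Fin 2, (V * pauli1 0 * Vᴴ) x x = 1 := by
    intro x
    have h : pauli1 0 = 1 := rfl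
    rw [h, Matrix.mul_one, hVV, Matrix.one_apply_eq]
  have hD1 : ∀ a : Fin 4, a ≠ 0 → (V * pauli1 a * Vᴴ) 1 1 = -D a := by
    intro a ha
    have htr : (V * pauli1 a * Vᴴ).trace = 0 := by
      rw [Matrix.trace_mul_cycle, hVV', Matrix.one_mul]
      fin_cases a
      · exact absurd rfl ha
      all_goals simp [pauli1, Matrix.trace_fin_two]
    rw [Matrix.trace_fin_two] at htr
    simp only [hDdef]
    linear_combination htr
  have hfac : ∀ (a : Fin 4) (x : Fin 2), (V * pauli1 a * Vᴴ) x x =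
      (if a = 0 then 1 else (-1 : ℂ) ^ (x : ℕ)) * (if a = 0 then 1 else D a) := by
    intro a x
    by_cases ha : a = 0
    · subst ha; simp [hD0]
    · simp only [ha, if_false]
      fin_cases x
      · simp [hDdef]
      · simp [hD1 a ha]
  have key : ∀ u : Fin n → Fin 4, (∏ i, (V * pauli1 (u i) * Vᴴ) (b i) (b i)) =
      (∏ i, if u i = 0 then 1 else (-1 : ℂ) ^ ((b i : ℕ))) *
        ∏ i, (if u i = 0 then 1 else D (u i)) := by
    intro u
    rw [← Finset.prod_mul_distrib]
    exact Finset.prod_congr rfl fun i _ => hfac (u i) (b i)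
  rw [key s, key t]
  congr 1
  · exact Finset.prod_congr rfl fun i _ => by simp only [hst.1 i]
  · rw [fiber_prod (fun a => if a = 0 then 1 else D a) s,
      fiber_prod (fun a => if a = 0 then 1 else D a) t]
    exact Finset.prod_congr rfl fun a _ => by rw [hst.2 a]

lemma sameClass_trans' {n : ℕ} {s u v : Fin n → Fin 4}
    (h1 : sameClass s u) (h2 : sameClass s v) : sameClass u v :=
  ⟨fun i => (h1.1 i).symm.trans (h2.1 i), fun a => (h1.2 a).symm.trans (h2.2 a)⟩

/-- diagonal elements `⟨b|V^{⊗n} P V^{†⊗n}|b⟩` of globally rotated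
Pauli strings depend only on the fixed-identity permutation-invariant class of
the string; consequently each `B_{S,k}^⊥` has vanishing diagonal elements in every
globally rotated computational basis. -/
theorem diag_depends_only_on_class (n : ℕ) :
    (∀ V ∈ Matrix.specialUnitaryGroup (Fin 2) ℂ,
      ∀ s t : Fin n → Fin 4, sameClass s t → ∀ b : Bits n,
        (tpow (n := n) V * pStr s * (tpow (n := n) V)ᴴ) b b =
          (tpow (n := n) V * pStr t * (tpow (n := n) V)ᴴ) b b) ∧
    (∀ V ∈ Matrix.specialUnitaryGroup (Fin 2) ℂ,
      ∀ s : Fin n → Fin 4, ∀ ℓ : ℕ → (Fin n → Fin 4),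
        Set.BijOn ℓ (Set.Iio ((cls s).card : ℕ)) ↑(cls s) →
        ∀ k, 1 ≤ k → k < (cls s).card → ∀ b : Bits n,
          (tpow (n := n) V *
              (((Real.sqrt (2 ^ n * (k : ℝ) * ((k : ℝ) + 1)) : ℂ))⁻¹ •
                ((∑ j ∈ Finset.range k, pStr (ℓ j)) - (k : ℂ) • pStr (ℓ k))) *
              (tpow (n := n) V)ᴴ) b b = 0) := by
  constructor
  · exact fun V hV s t hst b => conj_diag V hV s t hst b
  · intro V hV s ℓ hℓ k hk1 hk b
    have hmem : ∀ m, m < (cls s).card → sameClass s (ℓ m) := by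
      intro m hm
      have h : ℓ m ∈ (cls s : Set (Fin n → Fin 4)) := hℓ.mapsTo hm
      rw [Finset.mem_coe] at h
      classical
      simpa [cls] using h
    have hd : ∀ j ∈ Finset.range k,
        (tpow (n := n) V * pStr (ℓ j) * (tpow (n := n) V)ᴴ) b b =
          (tpow (n := n) V * pStr (ℓ k) * (tpow (n := n) V)ᴴ) b b := by
      intro j hj
      have hjlt : j < (cls s).card := lt_trans (Finset.mem_range.mp hj) hk
      exact conj_diag V hV _ _
        (sameClass_trans' (hmem j hjlt) (hmem k hk)) b
    simp only [Matrix.mul_smul, Matrix.smul_mul, Matrix.mul_sub, Matrix.sub_mul,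
      Matrix.mul_sum, Matrix.sum_mul, Matrix.smul_apply, Matrix.sub_apply,
      Matrix.sum_apply]
    rw [Finset.sum_congr rfl hd, Finset.sum_const, Finset.card_range]
    simp [smul_eq_mul]
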